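/- arXiv:1202.0618 — 2 statements merged into one kernel-verified Lean document; each statement's English description precedes it below -/
import Mathlib

section
/- For every real y and every natural number n, |H_n(y) e^{-y^2/2}| ≤ 2^{n/2} (2/(n! π)) Γ((n+1)/2). -/
open Real

/-- Hermite polynomial with normalization `H_n(x) = ((-1)^n / n!) e^{x²/2} (d/dx)^n e^{-x²/2}`. -/
noncomputable def hermiteH (n : ℕ) (x : ℝ) : ℝ :=
  ((-1 : ℝ) ^ n / n.factorial) * Real.exp (x ^ 2 / 2) *
    iteratedDeriv n (fun y : ℝ => Real.exp (-(y ^ 2) / 2)) x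

open Real Complex MeasureTheory FourierTransform

noncomputable def gaussR : ℝ → ℝ := fun x => Real.sqrt (2 * π) * Real.exp (-(2 * π ^ 2) * x ^ 2)
noncomputable def gaussC : ℝ → ℂ := fun x => ((gaussR x : ℝ) : ℂ)

lemma gaussC_eq : gaussC = (Real.sqrt (2 * π) : ℂ) • (fun x : ℝ => Complex.exp (-(π:ℂ) * ((2 * π : ℝ) : ℂ) * (x:ℂ) ^ 2)) := by
  funext x
  simp only [gaussC, gaussR, Pi.smul_apply, smul_eq_mul, Complex.ofReal_mul, Complex.ofReal_exp]
  congr 1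
  push_cast
  ring_nf

lemma fourier_gaussC : 𝓕 gaussC = fun t : ℝ => Complex.exp (-(t : ℂ) ^ 2 / 2) := by
  have h2π : (0:ℝ) < 2 * π := by positivity
  have hb : 0 < (((2 * π : ℝ) : ℂ)).re := by simpa using h2π
  have h1 := fourier_gaussian_pi (b := ((2 * π : ℝ) : ℂ)) hb
  have hsq : (((2 * π : ℝ) : ℂ)) ^ (1/2 : ℂ) = (Real.sqrt (2 * π) : ℂ) := by
    rw [Real.sqrt_eq_rpow, Complex.ofReal_cpow h2π.le]
    norm_num
  funext t
  have hs : (Real.sqrt (2 * π) : ℂ) ≠ 0 := by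
    simp [Real.sqrt_eq_zero', h2π.le, not_le, h2π]
    positivity
  rw [gaussC_eq]
  rw [show (𝓕 ((Real.sqrt (2 * π) : ℂ) • (fun x : ℝ => Complex.exp (-(π:ℂ) * ((2 * π : ℝ) : ℂ) * (x:ℂ) ^ 2)))) = (Real.sqrt (2 * π) : ℂ) • 𝓕 (fun x : ℝ => Complex.exp (-(π:ℂ) * ((2 * π : ℝ) : ℂ) * (x:ℂ) ^ 2)) from VectorFourier.fourierIntegral_const_smul _ _ _ _ _]
  rw [Pi.smul_apply, h1, hsq, smul_eq_mul, ← mul_assoc, mul_one_div, div_self hs, one_mul]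
  congr 1
  have hπ : (π : ℂ) ≠ 0 := by simpa using Real.pi_ne_zero
  push_cast
  field_simp

lemma gaussR_nonneg (x : ℝ) : 0 ≤ gaussR x := by
  unfold gaussR; positivity

lemma integrable_pow_gaussR (k : ℕ) :
    Integrable (fun x : ℝ => x ^ k * gaussR x) := by
  have hb : (0:ℝ) < 2 * π ^ 2 := by positivity
  have hs : (-1:ℝ) < (k:ℝ) := lt_of_lt_of_le (by norm_num) (Nat.cast_nonneg k)
  have h := ((integrable_rpow_mul_exp_neg_mul_sq hb hs).abs.const_mul (Real.sqrt (2 * π)))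
  apply h.mono'
  · apply Continuous.aestronglyMeasurable
    unfold gaussR
    continuity
  · filter_upwards with x
    have : |x ^ k * gaussR x| = Real.sqrt (2 * π) * |x ^ ((k:ℝ)) * Real.exp (-(2 * π ^ 2) * x ^ 2)| := by
      unfold gaussR
      rw [Real.rpow_natCast, abs_mul, abs_mul, _root_.abs_of_nonneg (Real.sqrt_nonneg _),
        _root_.abs_of_nonneg (Real.exp_nonneg _), abs_mul,
        _root_.abs_of_nonneg (Real.exp_nonneg _)]
      ring
    rw [Real.norm_eq_abs, this]

lemma integrable_pow_gaussC (k : ℕ) :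
    Integrable (fun x : ℝ => x ^ k • gaussC x) := by
  have : (fun x : ℝ => x ^ k • gaussC x) = fun x : ℝ => ((x ^ k * gaussR x : ℝ) : ℂ) := by
    funext x
    simp [gaussC, Complex.real_smul]
  rw [this]
  exact (integrable_pow_gaussR k).ofReal

lemma iteratedDeriv_ofReal (f : ℝ → ℝ) (hf : ContDiff ℝ (⊤:ℕ∞) f) (n : ℕ) (x : ℝ) :
    iteratedDeriv n (fun y : ℝ => ((f y : ℝ) : ℂ)) x = ((iteratedDeriv n f x : ℝ) : ℂ) := by
  have h := Complex.ofRealCLM.iteratedFDeriv_comp_left (𝕜 := ℝ) (x := x) hf.contDiffAt (by exact_mod_cast le_top : (n : WithTop ℕ∞) ≤ ((⊤:ℕ∞) : WithTop ℕ∞))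
  rw [iteratedDeriv_eq_iteratedFDeriv, iteratedDeriv_eq_iteratedFDeriv]
  have : (fun y : ℝ => ((f y : ℝ) : ℂ)) = Complex.ofRealCLM ∘ f := rfl
  rw [this, h]
  rfl

lemma contDiff_gaussSource : ContDiff ℝ (⊤:ℕ∞) (fun y : ℝ => Real.exp (-(y ^ 2) / 2)) := by
  apply Real.contDiff_exp.comp
  exact (contDiff_id.pow 2).neg.div_const 2

lemma scalar_eq (n : ℕ) :
    Real.sqrt (2*π) * (2*π)^n * ((2*π^2) ^ (-((n:ℝ)+1)/2)) = 2 ^ ((n:ℝ)/2) / Real.sqrt π := by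
  have hπ := Real.pi_pos
  have h2 : (0:ℝ) < 2 := two_pos
  set a : ℝ := -((n:ℝ)+1)/2 with ha
  have e1 : Real.sqrt (2*π) = 2 ^ (1/2:ℝ) * π ^ (1/2:ℝ) := by
    rw [Real.sqrt_eq_rpow, Real.mul_rpow h2.le hπ.le]
  have e2 : ((2*π)^n : ℝ) = 2 ^ (n:ℝ) * π ^ (n:ℝ) := by
    rw [mul_pow, Real.rpow_natCast, Real.rpow_natCast]
  have e3 : (2*π^2 : ℝ) ^ a = 2 ^ a * π ^ (2*a) := by
    rw [Real.mul_rpow h2.le (by positivity), ← Real.rpow_natCast π 2, ← Real.rpow_mul hπ.le]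
    norm_num [mul_comm]
  rw [e1, e2, e3]
  have e4 : 2 ^ (1/2:ℝ) * π ^ (1/2:ℝ) * (2 ^ (n:ℝ) * π ^ (n:ℝ)) * ((2:ℝ) ^ a * π ^ (2*a))
      = (2:ℝ) ^ ((1/2:ℝ) + (n:ℝ) + a) * π ^ ((1/2:ℝ) + (n:ℝ) + 2*a) := by
    rw [Real.rpow_add h2, Real.rpow_add h2, Real.rpow_add hπ, Real.rpow_add hπ]
    ring
  rw [e4, show (1/2:ℝ) + (n:ℝ) + a = (n:ℝ)/2 by rw [ha]; ring,
    show (1/2:ℝ) + (n:ℝ) + 2*a = -(1/2:ℝ) by rw [ha]; ring,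
    Real.rpow_neg hπ.le, Real.sqrt_eq_rpow, div_eq_mul_inv]
  ring

lemma gauss_deriv_bound (n : ℕ) (y : ℝ) :
    |iteratedDeriv n (fun x : ℝ => Real.exp (-(x ^ 2) / 2)) y| ≤
      2 ^ ((n:ℝ)/2) / Real.sqrt π * Real.Gamma (((n:ℝ) + 1) / 2) := by
  have hb : (0:ℝ) < 2 * π ^ 2 := by positivity
  have h1 : ((iteratedDeriv n (fun x : ℝ => Real.exp (-(x ^ 2) / 2)) y : ℝ) : ℂ)
      = iteratedDeriv n (fun x : ℝ => ((Real.exp (-(x ^ 2) / 2) : ℝ) : ℂ)) y :=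
    (iteratedDeriv_ofReal _ contDiff_gaussSource n y).symm
  have h2 : (fun x : ℝ => ((Real.exp (-(x ^ 2) / 2) : ℝ) : ℂ)) = 𝓕 gaussC := by
    rw [fourier_gaussC]
    funext x
    rw [Complex.ofReal_exp]
    congr 1
    push_cast
    ring
  have h3 := Real.iteratedDeriv_fourier (f := gaussC) (N := n)
      (fun k _ => integrable_pow_gaussC k) le_rfl
  have h4 : |iteratedDeriv n (fun x : ℝ => Real.exp (-(x ^ 2) / 2)) y|
      = ‖𝓕 (fun x : ℝ => (-2 * (π:ℂ) * Complex.I * x) ^ n • gaussC x) y‖ := by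
    rw [← Real.norm_eq_abs, ← Complex.norm_real, h1, h2, h3]
  rw [h4]
  have h5 : ∀ x : ℝ, ‖(-2 * (π:ℂ) * Complex.I * x) ^ n • gaussC x‖
      = ((2*π)^n * Real.sqrt (2*π)) * (|x| ^ n * Real.exp (-(2*π^2) * x^2)) := by
    intro x
    rw [norm_smul, norm_pow]
    simp only [norm_mul, norm_neg, Complex.norm_real, Real.norm_eq_abs, Complex.norm_I,
      Complex.norm_ofNat, mul_one, gaussC, gaussR]
    rw [_root_.abs_of_pos Real.pi_pos, _root_.abs_of_nonneg (Real.sqrt_nonneg _), _root_.abs_of_nonneg (Real.exp_nonneg _), mul_pow]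
    ring
  have h6 : (∫ x : ℝ, ‖(-2 * (π:ℂ) * Complex.I * x) ^ n • gaussC x‖)
      = ((2*π)^n * Real.sqrt (2*π)) * ∫ x : ℝ, |x| ^ n * Real.exp (-(2*π^2) * x^2) := by
    simp_rw [h5]
    rw [integral_const_mul]
  have h7 : (∫ x : ℝ, |x| ^ n * Real.exp (-(2*π^2) * x^2))
      = 2 * ∫ x in Set.Ioi (0:ℝ), x ^ n * Real.exp (-(2*π^2) * x^2) := by
    rw [← integral_comp_abs (f := fun t => t ^ n * Real.exp (-(2*π^2) * t^2))]
    congr 1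
    funext x
    rw [_root_.sq_abs]
  have h8 : (∫ x in Set.Ioi (0:ℝ), x ^ n * Real.exp (-(2*π^2) * x^2))
      = (2*π^2) ^ (-((n:ℝ)+1)/2) * (1/2) * Real.Gamma (((n:ℝ)+1)/2) := by
    rw [← integral_rpow_mul_exp_neg_mul_rpow two_pos
      (lt_of_lt_of_le (by norm_num) (Nat.cast_nonneg n) : (-1:ℝ) < (n:ℝ)) hb]
    refine setIntegral_congr_fun measurableSet_Ioi (fun x _ => ?_)
    rw [Real.rpow_natCast, Real.rpow_two]
  calc ‖𝓕 (fun x : ℝ => (-2 * (π:ℂ) * Complex.I * x) ^ n • gaussC x) y‖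
      ≤ ∫ x : ℝ, ‖(-2 * (π:ℂ) * Complex.I * x) ^ n • gaussC x‖ :=
        VectorFourier.norm_fourierIntegral_le_integral_norm _ _ _ _ _
    _ = 2 ^ ((n:ℝ)/2) / Real.sqrt π * Real.Gamma (((n:ℝ) + 1) / 2) := by
        rw [h6, h7, h8, ← scalar_eq n]
        ring

theorem stmt1 (y : ℝ) (n : ℕ) :
    |hermiteH n y * Real.exp (-(y ^ 2) / 2)| ≤
      (2 : ℝ) ^ ((n : ℝ) / 2) * (2 / (n.factorial * π)) * Real.Gamma ((n + 1) / 2) := by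
  have hπ := Real.pi_pos
  set D := iteratedDeriv n (fun x : ℝ => Real.exp (-(x ^ 2) / 2)) y with hD
  have hfac : (0:ℝ) < (n.factorial : ℝ) := by exact_mod_cast n.factorial_pos
  have hΓ : 0 < Real.Gamma (((n:ℝ)+1)/2) := Real.Gamma_pos_of_pos (by positivity)
  have h2p : (0:ℝ) < 2 ^ ((n:ℝ)/2) := by positivity
  have hsqrtπ : (0:ℝ) < Real.sqrt π := Real.sqrt_pos.mpr hπ
  have hsqrt2 : Real.sqrt π ≤ 2 := by
    nlinarith [Real.sq_sqrt hπ.le, Real.sqrt_nonneg π, Real.pi_le_four]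
  have hsqrt : 1/Real.sqrt π ≤ 2/π := by
    rw [div_le_div_iff₀ hsqrtπ hπ]
    nlinarith [Real.sq_sqrt hπ.le]
  have heq : hermiteH n y * Real.exp (-(y ^ 2) / 2) = ((-1 : ℝ) ^ n / n.factorial) * D := by
    unfold hermiteH
    rw [← hD]
    rw [show (-1 : ℝ) ^ n / n.factorial * Real.exp (y ^ 2 / 2) * D * Real.exp (-(y ^ 2) / 2)
      = (-1 : ℝ) ^ n / n.factorial * D * (Real.exp (y ^ 2 / 2) * Real.exp (-(y ^ 2) / 2)) by ring,
      ← Real.exp_add, show y ^ 2 / 2 + -(y ^ 2) / 2 = 0 by ring, Real.exp_zero, mul_one]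
  rw [heq, abs_mul, abs_div, _root_.abs_pow, abs_neg, abs_one, one_pow, Nat.abs_cast]
  calc (1:ℝ) / n.factorial * |D|
      ≤ (1:ℝ) / n.factorial * (2 ^ ((n:ℝ)/2) / Real.sqrt π * Real.Gamma (((n:ℝ)+1)/2)) := by
        apply mul_le_mul_of_nonneg_left (gauss_deriv_bound n y) (by positivity)
    _ = (2 ^ ((n:ℝ)/2) * Real.Gamma (((n:ℝ)+1)/2)) * (1/Real.sqrt π * (1/n.factorial)) := by
        ring
    _ ≤ (2 ^ ((n:ℝ)/2) * Real.Gamma (((n:ℝ)+1)/2)) * (2/π * (1/n.factorial)) := by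
        apply mul_le_mul_of_nonneg_left _ (by positivity)
        apply mul_le_mul_of_nonneg_right hsqrt (by positivity)
    _ = (2 : ℝ) ^ ((n : ℝ) / 2) * (2 / (n.factorial * π)) * Real.Gamma (((n:ℝ) + 1) / 2) := by
        ring
end

section
/- For every α < -1/2 and every x ∈ ℝ, the series ∑_{m≥0} (1+m)^α m! ∫_0^1 ∫_0^1 (p_{uv}(x) H_m(x/√(uv)))^2 uv du dv converges. -/
open Real MeasureTheory intervalIntegral Polynomial Filter Topology

/-- Centered Gaussian density of variance `s`. -/
noncomputable def gaussDensity (s x : ℝ) : ℝ := (2 * π * s) ^ (-(1 : ℝ) / 2) * Real.exp (-(x ^ 2) / (2 * s))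

noncomputable def Hp (m : ℕ) : ℝ[X] := (Polynomial.hermite m).map (Int.castRingHom ℝ)

lemma Hp_zero : Hp 0 = 1 := by simp [Hp, Polynomial.hermite_zero]

lemma Hp_succ (m : ℕ) : Hp (m+1) = X * Hp m - derivative (Hp m) := by
  simp [Hp, Polynomial.hermite_succ, Polynomial.derivative_map]

lemma Hp_deriv (m : ℕ) : derivative (Hp (m+1)) = C ((m:ℝ)+1) * Hp m := by
  induction m with
  | zero => simp [Hp_succ, Hp_zero]
  | succ n ih =>
    have step : derivative (Hp (n+1+1))
        = Hp (n+1) + C ((n:ℝ)+1) * (X * Hp n - derivative (Hp n)) := by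
      rw [Hp_succ (n+1), derivative_sub, derivative_mul, derivative_X, one_mul, ih,
        derivative_mul, derivative_C, zero_mul, zero_add]
      ring
    rw [step, ← Hp_succ n]
    push_cast
    simp only [C_add, C_1]
    ring

lemma tendsto_pow_mul_exp_neg_sq_atTop (i : ℕ) :
    Tendsto (fun y : ℝ => y ^ i * Real.exp (-(y^2))) atTop (nhds 0) := by
  have h1 : Tendsto (fun t : ℝ => t ^ i * Real.exp (-t)) atTop (nhds 0) :=
    tendsto_pow_mul_exp_neg_atTop_nhds_zero i
  have h2 : Tendsto (fun y : ℝ => y ^ 2) atTop atTop := by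
    exact tendsto_pow_atTop (by norm_num)
  have h3 : Tendsto (fun y : ℝ => (y^2) ^ i * Real.exp (-(y^2))) atTop (nhds 0) := h1.comp h2
  apply squeeze_zero' ?_ ?_ h3
  · filter_upwards [eventually_ge_atTop (1:ℝ)] with y hy
    positivity
  · filter_upwards [eventually_ge_atTop (1:ℝ)] with y hy
    have : y ^ i ≤ (y^2)^i := by
      apply pow_le_pow_left₀ (by linarith) (by nlinarith)
    exact mul_le_mul_of_nonneg_right this (Real.exp_nonneg _)

lemma tendsto_poly_mul_exp_neg_sq_atTop (P : ℝ[X]) :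
    Tendsto (fun y : ℝ => P.eval y * Real.exp (-(y^2))) atTop (nhds 0) := by
  have : ∀ y : ℝ, P.eval y * Real.exp (-(y^2))
      = ∑ i ∈ Finset.range (P.natDegree + 1), P.coeff i * (y ^ i * Real.exp (-(y^2))) := by
    intro y
    rw [Polynomial.eval_eq_sum_range, Finset.sum_mul]
    simp [mul_assoc]
  simp only [this]
  have := tendsto_finset_sum (Finset.range (P.natDegree + 1))
    (fun i _ => ((tendsto_pow_mul_exp_neg_sq_atTop i).const_mul (P.coeff i)))
  simpa using this

lemma tendsto_poly_mul_exp_neg_sq_atBot (P : ℝ[X]) :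
    Tendsto (fun y : ℝ => P.eval y * Real.exp (-(y^2))) atBot (nhds 0) := by
  have h := tendsto_poly_mul_exp_neg_sq_atTop (P.comp (-X))
  have h2 : Tendsto (fun y : ℝ => -y) atBot atTop := tendsto_neg_atBot_atTop
  have := h.comp h2
  simpa [Function.comp_def] using this

lemma integrable_poly_mul_exp_neg_sq (P : ℝ[X]) :
    Integrable (fun y : ℝ => P.eval y * Real.exp (-(y^2))) := by
  have : ∀ y : ℝ, P.eval y * Real.exp (-(y^2))
      = ∑ i ∈ Finset.range (P.natDegree + 1), P.coeff i * (y ^ i * Real.exp (-(y^2))) := by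
    intro y
    rw [Polynomial.eval_eq_sum_range, Finset.sum_mul]
    simp [mul_assoc]
  simp only [this]
  apply integrable_finset_sum
  intro i _
  apply Integrable.const_mul
  have h := integrable_rpow_mul_exp_neg_mul_sq (b := 1) one_pos (s := (i:ℝ)) (by linarith [Nat.cast_nonneg (α:=ℝ) i])
  simpa [Real.rpow_natCast] using h

noncomputable def Ig (P : ℝ[X]) : ℝ := ∫ y : ℝ, P.eval y * Real.exp (-(y^2))

lemma Ig_add (P Q : ℝ[X]) : Ig (P + Q) = Ig P + Ig Q := by
  unfold Ig
  simp only [eval_add, add_mul]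
  exact integral_add (integrable_poly_mul_exp_neg_sq P) (integrable_poly_mul_exp_neg_sq Q)

lemma Ig_sub (P Q : ℝ[X]) : Ig (P - Q) = Ig P - Ig Q := by
  unfold Ig
  simp only [eval_sub, sub_mul]
  exact integral_sub (integrable_poly_mul_exp_neg_sq P) (integrable_poly_mul_exp_neg_sq Q)

lemma Ig_Cmul (a : ℝ) (P : ℝ[X]) : Ig (C a * P) = a * Ig P := by
  unfold Ig
  simp only [eval_mul, eval_C, mul_assoc]
  exact MeasureTheory.integral_const_mul a _

lemma Ig_deriv (P : ℝ[X]) : Ig (derivative P) = 2 * Ig (X * P) := by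
  have key : Ig (derivative P - C 2 * (X * P)) = 0 := by
    set Q : ℝ[X] := derivative P - C 2 * (X * P) with hQ
    have hint : Integrable (fun y : ℝ => Q.eval y * Real.exp (-(y^2))) :=
      integrable_poly_mul_exp_neg_sq Q
    set F : ℝ → ℝ := fun y => P.eval y * Real.exp (-(y^2)) with hF
    have hderiv : ∀ y : ℝ, HasDerivAt F (Q.eval y * Real.exp (-(y^2))) y := by
      intro y
      have h1 : HasDerivAt (fun y : ℝ => Real.exp (-(y^2)))
          (Real.exp (-(y^2)) * -(2 * y)) y := by
        have := ((hasDerivAt_pow 2 y).neg).exp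
        simpa using this
      have h2 : HasDerivAt (fun y : ℝ => P.eval y * Real.exp (-(y^2))) _ y := (P.hasDerivAt y).mul h1
      convert h2 using 1
      simp only [hQ, eval_sub, eval_mul, eval_C, eval_X]
      ring
    have hcont : Continuous (fun y : ℝ => Q.eval y * Real.exp (-(y^2))) := by
      exact (Q.continuous_aeval).mul (Real.continuous_exp.comp ((continuous_pow 2).neg))
    have heval : ∀ R : ℝ, (∫ y in (-R)..R, Q.eval y * Real.exp (-(y^2))) = F R - F (-R) := by
      intro R
      exact intervalIntegral.integral_eq_sub_of_hasDerivAt (fun y _ => hderiv y)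
        (hcont.intervalIntegrable _ _)
    have hlim : Tendsto (fun R : ℝ => ∫ y in (-R)..R, Q.eval y * Real.exp (-(y^2)))
        atTop (nhds (Ig Q)) := by
      exact intervalIntegral_tendsto_integral hint tendsto_neg_atTop_atBot tendsto_id
    have hlim2 : Tendsto (fun R : ℝ => F R - F (-R)) atTop (nhds 0) := by
      have h1 : Tendsto (fun R : ℝ => F R) atTop (nhds 0) :=
        tendsto_poly_mul_exp_neg_sq_atTop P
      have h2 : Tendsto (fun R : ℝ => F (-R)) atTop (nhds 0) :=
        (tendsto_poly_mul_exp_neg_sq_atBot P).comp tendsto_neg_atTop_atBot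
      simpa using h1.sub h2
    have := tendsto_nhds_unique (by simpa only [heval] using hlim) hlim2
    exact this
  have := Ig_sub (derivative P) (C 2 * (X * P))
  rw [key, Ig_Cmul] at this
  linarith

noncomputable def Dm (m : ℕ) : ℝ := Ig (Hp m * Hp m)
noncomputable def Em (m : ℕ) : ℝ := Ig (Hp (m+2) * Hp m)

lemma Hp_succ' (m : ℕ) : Hp (m+2) = X * Hp (m+1) - C ((m:ℝ)+1) * Hp m := by
  rw [Hp_succ (m+1), Hp_deriv m]

lemma starA (m : ℕ) : ((m:ℝ)+1) * Dm m + Ig (Hp (m+1) * derivative (Hp m))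
    = 2 * Em m + 2 * (((m:ℝ)+1) * Dm m) := by
  have h := Ig_deriv (Hp (m+1) * Hp m)
  have hL : derivative (Hp (m+1) * Hp m)
      = C ((m:ℝ)+1) * (Hp m * Hp m) + Hp (m+1) * derivative (Hp m) := by
    rw [derivative_mul, Hp_deriv m]
    ring
  have hR : X * (Hp (m+1) * Hp m) = Hp (m+2) * Hp m + C ((m:ℝ)+1) * (Hp m * Hp m) := by
    rw [Hp_succ' m]
    ring
  rw [hL, hR, Ig_add, Ig_add, Ig_Cmul] at h
  unfold Dm Em
  linarith

lemma AB (m : ℕ) : Dm (m+1) + Ig (Hp (m+1) * derivative (Hp m))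
    = Em m + ((m:ℝ)+1) * Dm m := by
  have pid : Hp (m+1) * Hp (m+1) + Hp (m+1) * derivative (Hp m)
      = Hp (m+2) * Hp m + C ((m:ℝ)+1) * (Hp m * Hp m) := by
    rw [Hp_succ' m, Hp_succ m]
    ring
  have := congrArg Ig pid
  rw [Ig_add, Ig_add, Ig_Cmul] at this
  unfold Dm Em
  linarith [this]

lemma D_succ_eq (m : ℕ) : Dm (m+1) = - Em m := by
  linarith [starA m, AB m]

lemma E_rec (m : ℕ) : 2 * Em (m+1) = ((m:ℝ)+1) * Em m - ((m:ℝ)+2) * Dm (m+1) := by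
  have h := starA (m+1)
  have hz : Ig (Hp (m+2) * derivative (Hp (m+1))) = ((m:ℝ)+1) * Em m := by
    rw [Hp_deriv m, show Hp (m+2) * (C ((m:ℝ)+1) * Hp m) = C ((m:ℝ)+1) * (Hp (m+2) * Hp m) by ring,
      Ig_Cmul]
    rfl
  rw [hz] at h
  push_cast at h
  linarith

lemma Ig_one : Ig 1 = Real.sqrt π := by
  unfold Ig
  simp only [eval_one, one_mul]
  have := integral_gaussian 1
  simpa using this

lemma Ig_X2 : Ig (X * X) = Real.sqrt π / 2 := by
  have h := Ig_deriv (X : ℝ[X])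
  rw [derivative_X, Ig_one] at h
  linarith

lemma Dm_zero : Dm 0 = Real.sqrt π := by
  unfold Dm
  rw [Hp_zero, one_mul, Ig_one]

lemma Hp_one : Hp 1 = X := by
  rw [Hp_succ 0, Hp_zero]
  simp

lemma Hp_two : Hp 2 = X * X - 1 := by
  rw [Hp_succ 1, Hp_one, derivative_X]

lemma Em_zero : Em 0 = - (Real.sqrt π / 2) := by
  unfold Em
  rw [Hp_zero, mul_one, Hp_two, Ig_sub, Ig_X2, Ig_one]
  ring

noncomputable def dval (m : ℕ) : ℝ := Real.sqrt π * (2*m).factorial / (4^m * m.factorial)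

lemma dval_succ (m : ℕ) : dval (m+1) = (2*(m:ℝ)+1)/2 * dval m := by
  unfold dval
  have h1 : (2*(m+1)) = (2*m+1)+1 := by ring
  rw [h1, Nat.factorial_succ (2*m+1), Nat.factorial_succ (2*m), Nat.factorial_succ m]
  have h4 : (0:ℝ) < 4 ^ m := by positivity
  have hf : (0:ℝ) < (m.factorial : ℝ) := by exact_mod_cast Nat.factorial_pos m
  field_simp
  push_cast
  ring

lemma DE (m : ℕ) : Dm m = dval m ∧ Em m = - dval (m+1) := by
  induction m with
  | zero =>
    constructor
    · rw [Dm_zero]; unfold dval; norm_num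
    · rw [Em_zero, dval_succ 0]; unfold dval; norm_num; ring
  | succ n ih =>
    obtain ⟨hD, hE⟩ := ih
    have hD1 : Dm (n+1) = dval (n+1) := by
      rw [D_succ_eq, hE]; ring
    refine ⟨hD1, ?_⟩
    have h := E_rec n
    rw [hE, hD1, dval_succ (n+1)] at *
    push_cast at *
    nlinarith [h]

lemma Hp_eval (m : ℕ) (x : ℝ) : (Hp m).eval x = Polynomial.aeval x (Polynomial.hermite m) := by
  rw [Hp, Polynomial.eval_map, Polynomial.aeval_def, algebraMap_int_eq]

lemma hermiteH_eq (m : ℕ) (x : ℝ) : hermiteH m x = (Hp m).eval x / m.factorial := by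
  unfold hermiteH
  rw [show (fun y : ℝ => Real.exp (-(y ^ 2) / 2)) = (fun y : ℝ => Real.exp (-(y ^ 2 / 2))) by
    funext y; rw [neg_div]]
  rw [iteratedDeriv_eq_iterate, Polynomial.deriv_gaussian_eq_hermite_mul_gaussian]
  have h1 : Real.exp (x ^ 2 / 2) * Real.exp (-(x ^ 2 / 2)) = 1 := by
    rw [← Real.exp_add]; simp
  have h2 : ((-1:ℝ) ^ m) * ((-1:ℝ) ^ m) = 1 := by
    rw [← pow_add]; exact Even.neg_one_pow ⟨m, by ring⟩
  calc ((-1:ℝ) ^ m / m.factorial) * Real.exp (x ^ 2 / 2) *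
      ((-1:ℝ) ^ m * (Polynomial.aeval x (Polynomial.hermite m)) * Real.exp (-(x ^ 2 / 2)))
      = (((-1:ℝ) ^ m * (-1:ℝ) ^ m) * (Real.exp (x ^ 2 / 2) * Real.exp (-(x ^ 2 / 2))) *
          (Polynomial.aeval x (Polynomial.hermite m))) / m.factorial := by ring
    _ = (Polynomial.aeval x (Polynomial.hermite m)) / m.factorial := by rw [h1, h2]; ring
    _ = (Hp m).eval x / m.factorial := by rw [Hp_eval]

lemma sqrt_div_helper {a b c : ℝ} (ha : 0 < a) (hb : 0 < b) (hc : 0 ≤ c)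
    (h : c^2 * b ≤ a) : c * (1 / Real.sqrt a) ≤ 1 / Real.sqrt b := by
  have hsa : 0 < Real.sqrt a := Real.sqrt_pos.mpr ha
  have hsb : 0 < Real.sqrt b := Real.sqrt_pos.mpr hb
  rw [mul_one_div, div_le_div_iff₀ hsa hsb]
  have h1 : c * Real.sqrt b = Real.sqrt (c^2 * b) := by
    rw [Real.sqrt_mul (sq_nonneg c), Real.sqrt_sq hc]
  rw [h1]
  calc Real.sqrt (c^2*b) ≤ Real.sqrt a := Real.sqrt_le_sqrt h
  _ = 1 * Real.sqrt a := by ring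

noncomputable def tseq (m : ℕ) : ℝ := ((2*m).factorial : ℝ) / (4^m * ((m.factorial : ℝ))^2)

lemma tseq_succ (m : ℕ) : tseq (m+1) = tseq m * ((2*(m:ℝ)+1)/(2*(m:ℝ)+2)) := by
  unfold tseq
  have h1 : (2*(m+1)) = (2*m+1)+1 := by ring
  rw [h1, Nat.factorial_succ (2*m+1), Nat.factorial_succ (2*m), Nat.factorial_succ m]
  have h4 : (0:ℝ) < 4 ^ m := by positivity
  have hf : (0:ℝ) < (m.factorial : ℝ) := by exact_mod_cast Nat.factorial_pos m
  field_simp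
  push_cast
  ring

lemma tseq_nonneg (m : ℕ) : 0 ≤ tseq m := by
  unfold tseq
  positivity

lemma tseq_bound (m : ℕ) : tseq m ≤ 1 / Real.sqrt (1+(m:ℝ)) := by
  induction m with
  | zero => simp [tseq]
  | succ n ih =>
    rw [tseq_succ]
    push_cast
    have hc : (0:ℝ) ≤ (2*(n:ℝ)+1)/(2*(n:ℝ)+2) := by positivity
    calc tseq n * ((2*(n:ℝ)+1)/(2*(n:ℝ)+2))
        ≤ (1 / Real.sqrt (1+(n:ℝ))) * ((2*(n:ℝ)+1)/(2*(n:ℝ)+2)) := by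
          apply mul_le_mul_of_nonneg_right ih hc
      _ = ((2*(n:ℝ)+1)/(2*(n:ℝ)+2)) * (1 / Real.sqrt (1+(n:ℝ))) := by ring
      _ ≤ 1 / Real.sqrt (1+((n:ℝ)+1)) := by
          apply sqrt_div_helper (by positivity) (by positivity) hc
          have : (0:ℝ) ≤ (n:ℝ) := Nat.cast_nonneg n
          rw [div_pow]
          rw [div_mul_eq_mul_div, div_le_iff₀ (by positivity)]
          nlinarith

lemma dval_div_factorial (m : ℕ) :
    dval m / m.factorial = Real.sqrt π * tseq m := by
  unfold dval tseq
  have hf : (0:ℝ) < (m.factorial : ℝ) := by exact_mod_cast Nat.factorial_pos m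
  field_simp

noncomputable def rseq (m : ℕ) : ℝ := ((Hp m).eval 0)^2 / m.factorial

lemma rseq_step (m : ℕ) : rseq (m+2) = ((m:ℝ)+1)/((m:ℝ)+2) * rseq m := by
  unfold rseq
  have h0 : (Hp (m+2)).eval 0 = -(((m:ℝ)+1)) * (Hp m).eval 0 := by
    rw [Hp_succ' m]
    simp
    ring
  rw [h0]
  have h1 : ((m+2).factorial : ℝ) = ((m:ℝ)+2)*(((m:ℝ)+1)*(m.factorial:ℝ)) := by
    rw [Nat.factorial_succ, Nat.factorial_succ]
    push_cast
    ring
  rw [h1]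
  have hf : (0:ℝ) < (m.factorial : ℝ) := by exact_mod_cast Nat.factorial_pos m
  field_simp

lemma rseq_nonneg (m : ℕ) : 0 ≤ rseq m := by
  unfold rseq
  positivity

lemma rseq_bound : ∀ m : ℕ, rseq m ≤ 1 / Real.sqrt (1+(m:ℝ)) := by
  have key : ∀ k : ℕ, ∀ m : ℕ, m ≤ k → rseq m ≤ 1 / Real.sqrt (1+(m:ℝ)) := by
    intro k
    induction k with
    | zero =>
      intro m hm
      interval_cases m
      simp [rseq, Hp_zero]
    | succ n ih =>
      intro m hm
      match m with
      | 0 => simp [rseq, Hp_zero]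
      | 1 => simp [rseq, Hp_one]
      | (j+2) =>
        have hj : j ≤ n := by omega
        have hja : rseq j ≤ 1 / Real.sqrt (1+(j:ℝ)) := by
          apply ih j (by omega)
        rw [rseq_step]
        have hc : (0:ℝ) ≤ ((j:ℝ)+1)/((j:ℝ)+2) := by positivity
        calc ((j:ℝ)+1)/((j:ℝ)+2) * rseq j
            ≤ ((j:ℝ)+1)/((j:ℝ)+2) * (1 / Real.sqrt (1+(j:ℝ))) :=
              mul_le_mul_of_nonneg_left hja hc
          _ ≤ 1 / Real.sqrt (1+((j:ℝ)+2)) := by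
              apply sqrt_div_helper (by positivity) (by positivity) hc
              have : (0:ℝ) ≤ (j:ℝ) := Nat.cast_nonneg j
              rw [div_pow, div_mul_eq_mul_div, div_le_iff₀ (by positivity)]
              nlinarith
          _ = 1 / Real.sqrt (1+((j:ℕ)+2:ℕ):ℝ) := by push_cast; ring_nf
  intro m
  exact key m m le_rfl

noncomputable def psif (m : ℕ) : ℝ → ℝ := fun y => ((Hp m * Hp m).eval y) * Real.exp (-(y^2))

lemma psif_apply (m : ℕ) (y : ℝ) : psif m y = ((Hp m).eval y)^2 * Real.exp (-(y^2)) := by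
  simp [psif, eval_mul, sq]

lemma psif_nonneg (m : ℕ) (y : ℝ) : 0 ≤ psif m y := by
  rw [psif_apply]; positivity

lemma psif_cont (m : ℕ) : Continuous (psif m) :=
  ((Hp m * Hp m).continuous_aeval).mul (Real.continuous_exp.comp ((continuous_pow 2).neg))

lemma psif_integrable (m : ℕ) : Integrable (psif m) :=
  integrable_poly_mul_exp_neg_sq (Hp m * Hp m)

lemma psif_integral (m : ℕ) : ∫ y : ℝ, psif m y = dval m := by
  have := (DE m).1
  unfold Dm Ig at this
  exact this

lemma psif_bound (m : ℕ) : ∃ M : ℝ, 0 ≤ M ∧ ∀ y : ℝ, psif m y ≤ M := by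
  have h1 : Tendsto (psif m) atTop (nhds 0) := tendsto_poly_mul_exp_neg_sq_atTop _
  have h2 : Tendsto (psif m) atBot (nhds 0) := tendsto_poly_mul_exp_neg_sq_atBot _
  obtain ⟨A, hA⟩ := (Filter.eventually_atTop).mp (h1.eventually_lt_const one_pos)
  obtain ⟨B, hB⟩ := (Filter.eventually_atBot).mp (h2.eventually_lt_const one_pos)
  obtain ⟨y0, hy0mem, hy0⟩ := isCompact_Icc.exists_isMaxOn
    (Set.nonempty_Icc.mpr (min_le_max : min B A ≤ max B A)) ((psif_cont m).continuousOn)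
  refine ⟨max (psif m y0) 1, le_trans zero_le_one (le_max_right _ _), fun y => ?_⟩
  by_cases hy : y ∈ Set.Icc (min B A) (max B A)
  · exact le_max_of_le_left (hy0 hy)
  · rw [Set.mem_Icc, not_and_or, not_le, not_le] at hy
    rcases hy with hy | hy
    · exact le_max_of_le_right (le_of_lt (hB y (le_of_lt (lt_of_lt_of_le hy (min_le_left _ _)))))
    · exact le_max_of_le_right (le_of_lt (hA y (le_of_lt (lt_of_le_of_lt (le_max_right _ _) hy))))

noncomputable def gfun (m : ℕ) (x : ℝ) : ℝ → ℝ :=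
  fun s => (gaussDensity s x * hermiteH m (x / Real.sqrt s))^2 * s

lemma g_eq (m : ℕ) (x : ℝ) {s : ℝ} (hs : 0 < s) :
    gfun m x s = ((2*π)⁻¹ / ((m.factorial:ℝ))^2) * psif m (x / Real.sqrt s) := by
  unfold gfun gaussDensity
  rw [hermiteH_eq, psif_apply]
  have hπ : 0 < 2*π*s := by positivity
  have h1 : ((2*π*s) ^ (-(1:ℝ)/2))^2 = (2*π*s)⁻¹ := by
    rw [← Real.rpow_natCast ((2*π*s) ^ (-(1:ℝ)/2)) 2, ← Real.rpow_mul hπ.le]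
    norm_num [Real.rpow_neg_one]
  have h2 : Real.exp (-(x^2)/(2*s)) ^ 2 = Real.exp (-(x^2)/s) := by
    rw [sq, ← Real.exp_add]
    congr 1
    field_simp
    ring
  have h3 : (x / Real.sqrt s)^2 = x^2 / s := by
    rw [div_pow, Real.sq_sqrt hs.le]
  rw [mul_pow, mul_pow, h1, div_pow, h2, h3]
  have hm : ((m.factorial:ℝ))^2 ≠ 0 := by positivity
  have hπ2 : (2*π) ≠ 0 := by positivity
  field_simp

noncomputable def Kval (m : ℕ) (x : ℝ) : ℝ :=
  ∫ s in Set.Ioc (0:ℝ) 1, gfun m x s / Real.sqrt s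

lemma gfun_nonneg (m : ℕ) (x : ℝ) {s : ℝ} (hs : 0 ≤ s) : 0 ≤ gfun m x s := by
  unfold gfun; positivity

lemma gfun_contOn (m : ℕ) (x : ℝ) : ContinuousOn (gfun m x) (Set.Ioi 0) := by
  apply ContinuousOn.congr (f := fun s : ℝ =>
    ((2*π)⁻¹ / ((m.factorial:ℝ))^2) * psif m (x / Real.sqrt s))
  · apply ContinuousOn.mul continuousOn_const
    apply (psif_cont m).comp_continuousOn
    exact ContinuousOn.div continuousOn_const Real.continuous_sqrt.continuousOn
      (fun s hs => ne_of_gt (Real.sqrt_pos.mpr hs))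
  · intro s hs
    exact g_eq m x hs

lemma sqrt_rpow_half (s : ℝ) (hs : 0 < s) : (Real.sqrt s)⁻¹ = s ^ (-(1:ℝ)/2) := by
  rw [Real.sqrt_eq_rpow s, ← Real.rpow_neg_one (s ^ ((1:ℝ)/2)), ← Real.rpow_mul hs.le]
  norm_num

lemma rpow_half_integrableOn : IntegrableOn (fun s : ℝ => s ^ (-(1:ℝ)/2)) (Set.Ioc 0 1) := by
  have h := intervalIntegral.intervalIntegrable_rpow' (a := 0) (b := 1)
    (r := -(1:ℝ)/2) (by norm_num)
  rwa [intervalIntegrable_iff_integrableOn_Ioc_of_le zero_le_one] at h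

lemma gfun_integrableOn (m : ℕ) (x : ℝ) : IntegrableOn (gfun m x) (Set.Ioc 0 1) := by
  obtain ⟨M, hM0, hM⟩ := psif_bound m
  set c1 : ℝ := (2*π)⁻¹ / ((m.factorial:ℝ))^2 with hc1
  have hc1nn : 0 ≤ c1 := by positivity
  apply Integrable.mono' (g := fun _ => c1 * M)
  · exact integrable_const _
  · exact ((gfun_contOn m x).mono Set.Ioc_subset_Ioi_self).aestronglyMeasurable measurableSet_Ioc
  · rw [ae_restrict_iff' measurableSet_Ioc]
    apply ae_of_all
    intro s hs
    rw [Real.norm_eq_abs, abs_of_nonneg (gfun_nonneg m x hs.1.le), g_eq m x hs.1]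
    exact mul_le_mul_of_nonneg_left (hM _) hc1nn

lemma kfun_integrableOn (m : ℕ) (x : ℝ) :
    IntegrableOn (fun s => gfun m x s / Real.sqrt s) (Set.Ioc 0 1) := by
  obtain ⟨M, hM0, hM⟩ := psif_bound m
  set c1 : ℝ := (2*π)⁻¹ / ((m.factorial:ℝ))^2 with hc1
  have hc1nn : 0 ≤ c1 := by positivity
  apply Integrable.mono' (g := fun s => (c1 * M) * s ^ (-(1:ℝ)/2))
  · exact rpow_half_integrableOn.const_mul _
  · apply ContinuousOn.aestronglyMeasurable _ measurableSet_Ioc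
    apply ContinuousOn.div ((gfun_contOn m x).mono Set.Ioc_subset_Ioi_self)
      (Real.continuous_sqrt.continuousOn)
      (fun s hs => ne_of_gt (Real.sqrt_pos.mpr hs.1))
  · rw [ae_restrict_iff' measurableSet_Ioc]
    apply ae_of_all
    intro s hs
    have h1 : 0 ≤ gfun m x s / Real.sqrt s :=
      div_nonneg (gfun_nonneg m x hs.1.le) (Real.sqrt_nonneg s)
    rw [Real.norm_eq_abs, abs_of_nonneg h1, div_eq_mul_inv, sqrt_rpow_half s hs.1]
    have h2 : gfun m x s ≤ c1 * M := by
      rw [g_eq m x hs.1]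
      exact mul_le_mul_of_nonneg_left (hM _) hc1nn
    exact mul_le_mul_of_nonneg_right h2 (Real.rpow_nonneg hs.1.le _)

lemma Kval_nonneg (m : ℕ) (x : ℝ) : 0 ≤ Kval m x := by
  apply setIntegral_nonneg measurableSet_Ioc
  intro s hs
  exact div_nonneg (gfun_nonneg m x hs.1.le) (Real.sqrt_nonneg s)

lemma inner_eq (m : ℕ) (x : ℝ) {u : ℝ} (hu : u ∈ Set.Ioc (0:ℝ) 1) :
    (∫ v in (0:ℝ)..1, gfun m x (u*v)) = u⁻¹ * ∫ t in Set.Ioc 0 u, gfun m x t := by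
  rw [intervalIntegral.integral_comp_mul_left _ hu.1.ne', mul_zero, mul_one, smul_eq_mul,
    intervalIntegral.integral_of_le hu.1.le]

lemma inner_le (m : ℕ) (x : ℝ) {u : ℝ} (hu : u ∈ Set.Ioc (0:ℝ) 1) :
    u⁻¹ * (∫ t in Set.Ioc 0 u, gfun m x t) ≤ Kval m x * u ^ (-(1:ℝ)/2) := by
  have hksub : IntegrableOn (fun s => gfun m x s / Real.sqrt s) (Set.Ioc 0 u) :=
    (kfun_integrableOn m x).mono_set (Set.Ioc_subset_Ioc_right hu.2)
  have h1 : (∫ t in Set.Ioc 0 u, gfun m x t)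
      ≤ ∫ t in Set.Ioc 0 u, Real.sqrt u * (gfun m x t / Real.sqrt t) := by
    apply setIntegral_mono_on
    · exact (gfun_integrableOn m x).mono_set (Set.Ioc_subset_Ioc_right hu.2)
    · exact hksub.const_mul _
    · exact measurableSet_Ioc
    · intro t ht
      have hst : Real.sqrt t ≠ 0 := ne_of_gt (Real.sqrt_pos.mpr ht.1)
      calc gfun m x t = (gfun m x t / Real.sqrt t) * Real.sqrt t := by
            field_simp
        _ ≤ (gfun m x t / Real.sqrt t) * Real.sqrt u := by
            apply mul_le_mul_of_nonneg_left (Real.sqrt_le_sqrt ht.2)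
            exact div_nonneg (gfun_nonneg m x ht.1.le) (Real.sqrt_nonneg t)
        _ = Real.sqrt u * (gfun m x t / Real.sqrt t) := by ring
  have h2 : (∫ t in Set.Ioc 0 u, Real.sqrt u * (gfun m x t / Real.sqrt t))
      = Real.sqrt u * ∫ t in Set.Ioc 0 u, gfun m x t / Real.sqrt t :=
    MeasureTheory.integral_const_mul _ _
  have h3 : (∫ t in Set.Ioc 0 u, gfun m x t / Real.sqrt t) ≤ Kval m x := by
    apply setIntegral_mono_set (kfun_integrableOn m x)
    · filter_upwards [ae_restrict_mem measurableSet_Ioc] with s hs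
      exact div_nonneg (gfun_nonneg m x hs.1.le) (Real.sqrt_nonneg s)
    · apply HasSubset.Subset.eventuallyLE (Set.Ioc_subset_Ioc_right hu.2)
  have h4 : 0 ≤ (Real.sqrt u)⁻¹ := by positivity
  have hu0 : 0 < u := hu.1
  calc u⁻¹ * (∫ t in Set.Ioc 0 u, gfun m x t)
      ≤ u⁻¹ * (Real.sqrt u * Kval m x) := by
        apply mul_le_mul_of_nonneg_left _ (by positivity)
        rw [h2] at h1
        calc (∫ t in Set.Ioc 0 u, gfun m x t)
            ≤ Real.sqrt u * ∫ t in Set.Ioc 0 u, gfun m x t / Real.sqrt t := h1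
          _ ≤ Real.sqrt u * Kval m x :=
              mul_le_mul_of_nonneg_left h3 (Real.sqrt_nonneg u)
    _ = Kval m x * (u⁻¹ * Real.sqrt u) := by ring
    _ = Kval m x * u ^ (-(1:ℝ)/2) := by
        congr 1
        rw [← sqrt_rpow_half u hu0]
        rw [← Real.sqrt_mul_self hu0.le]
        field_simp
        rw [Real.sq_sqrt (Real.sqrt_nonneg _)]

lemma I_le (m : ℕ) (x : ℝ) :
    (∫ u in (0:ℝ)..1, ∫ v in (0:ℝ)..1, gfun m x (u*v)) ≤ 2 * Kval m x := by
  have heq : Set.EqOn (fun u => ∫ v in (0:ℝ)..1, gfun m x (u*v))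
      (fun u => u⁻¹ * ∫ t in Set.Ioc 0 u, gfun m x t) (Set.Ioc 0 1) :=
    fun u hu => inner_eq m x hu
  have hprim_nonneg : ∀ u : ℝ, 0 ≤ ∫ t in Set.Ioc 0 u, gfun m x t := by
    intro u
    apply setIntegral_nonneg measurableSet_Ioc
    intro t ht
    exact gfun_nonneg m x ht.1.le
  have hprim_cont : ContinuousOn (fun u => ∫ t in Set.Ioc 0 u, gfun m x t) (Set.Icc 0 1) :=
    intervalIntegral.continuousOn_primitive
      ((integrableOn_Icc_iff_integrableOn_Ioc).mpr (gfun_integrableOn m x))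
  have hcontOn : ContinuousOn (fun u : ℝ => u⁻¹ * ∫ t in Set.Ioc 0 u, gfun m x t)
      (Set.Ioc 0 1) := by
    apply ContinuousOn.mul
    · exact continuousOn_id.inv₀ (fun u hu => ne_of_gt hu.1)
    · exact hprim_cont.mono Set.Ioc_subset_Icc_self
  have hdom_int : IntegrableOn (fun u : ℝ => Kval m x * u ^ (-(1:ℝ)/2)) (Set.Ioc 0 1) :=
    rpow_half_integrableOn.const_mul _
  have hrep_int : IntegrableOn (fun u : ℝ => u⁻¹ * ∫ t in Set.Ioc 0 u, gfun m x t)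
      (Set.Ioc 0 1) := by
    apply Integrable.mono' hdom_int (hcontOn.aestronglyMeasurable measurableSet_Ioc)
    filter_upwards [ae_restrict_mem measurableSet_Ioc] with u hu
    rw [Real.norm_eq_abs, abs_of_nonneg (mul_nonneg (inv_nonneg.mpr hu.1.le) (hprim_nonneg u))]
    exact inner_le m x hu
  have hI_int : IntegrableOn (fun u => ∫ v in (0:ℝ)..1, gfun m x (u*v)) (Set.Ioc 0 1) :=
    hrep_int.congr_fun heq.symm measurableSet_Ioc
  rw [intervalIntegral.integral_of_le zero_le_one]
  calc (∫ u in Set.Ioc (0:ℝ) 1, ∫ v in (0:ℝ)..1, gfun m x (u*v))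
      ≤ ∫ u in Set.Ioc (0:ℝ) 1, Kval m x * u ^ (-(1:ℝ)/2) := by
        apply setIntegral_mono_on hI_int hdom_int measurableSet_Ioc
        intro u hu
        have h := inner_le m x hu
        rw [← inner_eq m x hu] at h
        exact h
    _ = Kval m x * ∫ u in Set.Ioc (0:ℝ) 1, u ^ (-(1:ℝ)/2) :=
        MeasureTheory.integral_const_mul _ _
    _ = 2 * Kval m x := by
        have h2 : (∫ u in Set.Ioc (0:ℝ) 1, u ^ (-(1:ℝ)/2)) = 2 := by
          rw [← intervalIntegral.integral_of_le zero_le_one,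
            integral_rpow (Or.inl (by norm_num))]
          norm_num [Real.zero_rpow, Real.one_rpow]
        rw [h2]
        ring

lemma K_le (m : ℕ) (x : ℝ) (hx : x ≠ 0) :
    Kval m x ≤ (2 * ((2*π)⁻¹ / ((m.factorial:ℝ))^2) / |x|) * dval m := by
  set c1 : ℝ := (2*π)⁻¹ / ((m.factorial:ℝ))^2 with hc1
  have hc1nn : 0 ≤ c1 := by positivity
  have hxabs : 0 < |x| := abs_pos.mpr hx
  set Fb : ℝ → ℝ := fun y => (2 * c1 / |x|) * psif m y with hFb
  set f : ℝ → ℝ := fun s => x / Real.sqrt s with hf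
  set f' : ℝ → ℝ := fun s => x * (-(1:ℝ)/2 * s ^ ((-(1:ℝ)/2) - 1)) with hf'
  have hFb_int : Integrable Fb := (psif_integrable m).const_mul _
  have hFb_nonneg : ∀ y, 0 ≤ Fb y := fun y => mul_nonneg (by positivity) (psif_nonneg m y)
  have hfeq : ∀ t : ℝ, 0 < t → x * t ^ (-(1:ℝ)/2) = f t := by
    intro t ht
    rw [hf]
    simp only []
    rw [Real.sqrt_eq_rpow, show (-(1:ℝ)/2) = -((1:ℝ)/2) by norm_num, Real.rpow_neg ht.le]
    exact (div_eq_mul_inv x _).symm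
  have hderiv : ∀ s ∈ Set.Ioo (0:ℝ) 1, HasDerivWithinAt f (f' s) (Set.Ioo 0 1) s := by
    intro s hs
    have h0 : HasDerivAt (fun t : ℝ => t ^ (-(1:ℝ)/2)) (-(1:ℝ)/2 * s ^ ((-(1:ℝ)/2) - 1)) s :=
      Real.hasDerivAt_rpow_const (Or.inl hs.1.ne')
    have h1 : HasDerivAt (fun t : ℝ => x * t ^ (-(1:ℝ)/2))
        (x * (-(1:ℝ)/2 * s ^ ((-(1:ℝ)/2) - 1))) s := h0.const_mul x
    apply (h1.hasDerivWithinAt).congr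
    · intro t ht
      exact (hfeq t ht.1).symm
    · exact (hfeq s hs.1).symm
  have hinj : Set.InjOn f (Set.Ioo 0 1) := by
    intro a ha b hb hab
    rw [hf] at hab
    simp only [] at hab
    have hsa : (0:ℝ) < Real.sqrt a := Real.sqrt_pos.mpr ha.1
    have hsb : (0:ℝ) < Real.sqrt b := Real.sqrt_pos.mpr hb.1
    rw [div_eq_div_iff hsa.ne' hsb.ne'] at hab
    have h2 : Real.sqrt b = Real.sqrt a := mul_left_cancel₀ hx hab
    have h3 := congrArg (fun z : ℝ => z^2) h2
    simpa [Real.sq_sqrt ha.1.le, Real.sq_sqrt hb.1.le] using h3.symm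
  have hpoint : ∀ s ∈ Set.Ioo (0:ℝ) 1, gfun m x s / Real.sqrt s ≤ |f' s| * Fb (f s) := by
    intro s hs
    have hs0 : 0 < s := hs.1
    have habs : |f' s| = |x| * (1/2 * s ^ ((-(1:ℝ)/2) - 1)) := by
      rw [hf']
      simp only []
      rw [abs_mul, abs_mul]
      rw [abs_of_nonneg (Real.rpow_nonneg hs0.le _)]
      norm_num
    have hψ : 0 ≤ psif m (f s) := psif_nonneg m _
    have hrp : s ^ (-(1:ℝ)/2) ≤ s ^ ((-(1:ℝ)/2) - 1) :=
      Real.rpow_le_rpow_of_exponent_ge hs0 hs.2.le (by norm_num)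
    have hL : gfun m x s / Real.sqrt s = (c1 * psif m (f s)) * s ^ (-(1:ℝ)/2) := by
      rw [g_eq m x hs0, div_eq_mul_inv, sqrt_rpow_half s hs0, hf]
    have hR : |f' s| * Fb (f s) = (c1 * psif m (f s)) * s ^ ((-(1:ℝ)/2) - 1) := by
      rw [habs, hFb]
      simp only []
      field_simp
    rw [hL, hR]
    exact mul_le_mul_of_nonneg_left hrp (mul_nonneg hc1nn hψ)
  have hchange := integral_image_eq_integral_abs_deriv_smul measurableSet_Ioo hderiv hinj Fb
  have hRHS_int : IntegrableOn (fun s => |f' s| * Fb (f s)) (Set.Ioo 0 1) := by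
    have := (integrableOn_image_iff_integrableOn_abs_deriv_smul measurableSet_Ioo hderiv hinj
      Fb).mp (hFb_int.integrableOn)
    simpa [smul_eq_mul] using this
  calc Kval m x = ∫ s in Set.Ioo (0:ℝ) 1, gfun m x s / Real.sqrt s := by
        rw [Kval, MeasureTheory.integral_Ioc_eq_integral_Ioo]
    _ ≤ ∫ s in Set.Ioo (0:ℝ) 1, |f' s| * Fb (f s) := by
        apply setIntegral_mono_on ((kfun_integrableOn m x).mono_set Set.Ioo_subset_Ioc_self)
          hRHS_int measurableSet_Ioo hpoint
    _ = ∫ y in f '' Set.Ioo (0:ℝ) 1, Fb y := by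
        rw [hchange]
        simp [smul_eq_mul]
    _ ≤ ∫ y, Fb y := setIntegral_le_integral hFb_int (ae_of_all _ hFb_nonneg)
    _ = (2 * c1 / |x|) * dval m := by
        rw [hFb]
        simp only []
        rw [MeasureTheory.integral_const_mul, psif_integral]

lemma ioc_rpow_half_integral : (∫ u in Set.Ioc (0:ℝ) 1, u ^ (-(1:ℝ)/2)) = 2 := by
  rw [← intervalIntegral.integral_of_le zero_le_one, integral_rpow (Or.inl (by norm_num))]
  norm_num [Real.zero_rpow, Real.one_rpow]

lemma K_zero (m : ℕ) :
    Kval m 0 = 2 * (((2*π)⁻¹ / ((m.factorial:ℝ))^2) * ((Hp m).eval 0)^2) := by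
  have hval : Set.EqOn (fun s => gfun m 0 s / Real.sqrt s)
      (fun s => ((((2*π)⁻¹ / ((m.factorial:ℝ))^2) * ((Hp m).eval 0)^2)) * s ^ (-(1:ℝ)/2))
      (Set.Ioc (0:ℝ) 1) := by
    intro s hs
    simp only []
    rw [g_eq m 0 hs.1, zero_div]
    have hψ0 : psif m 0 = ((Hp m).eval 0)^2 := by
      rw [psif_apply]
      norm_num
    rw [hψ0, div_eq_mul_inv, sqrt_rpow_half s hs.1]
  rw [Kval, setIntegral_congr_fun measurableSet_Ioc hval, MeasureTheory.integral_const_mul,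
    ioc_rpow_half_integral]
  ring

lemma summable_aux (α : ℝ) (hα : α < -1/2) (C : ℝ) :
    Summable (fun m : ℕ => C * ((1+(m:ℝ))^α * (1/Real.sqrt (1+(m:ℝ))))) := by
  apply Summable.mul_left
  have h1 : Summable (fun m : ℕ => ((m:ℝ)) ^ (α - 1/2)) :=
    Real.summable_nat_rpow.mpr (by linarith)
  have h2 := (summable_nat_add_iff 1).mpr h1
  apply h2.congr
  intro m
  have hpos : (0:ℝ) < 1 + (m:ℝ) := by positivity
  have hcast : (((m+1 : ℕ)):ℝ) = 1 + (m:ℝ) := by push_cast; ring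
  simp only [hcast]
  rw [show α - 1/2 = α + (-(1/2 : ℝ)) by ring, Real.rpow_add hpos]
  congr 1
  rw [Real.rpow_neg hpos.le, Real.sqrt_eq_rpow, one_div]
  norm_num

theorem stmt6 (α : ℝ) (hα : α < -1/2) (x : ℝ) :
    Summable (fun m : ℕ => (1 + (m : ℝ)) ^ α * (m.factorial : ℝ) *
      ∫ u in (0:ℝ)..1, ∫ v in (0:ℝ)..1,
        (gaussDensity (u * v) x * hermiteH m (x / Real.sqrt (u * v))) ^ 2 * (u * v)) := by
  have hIeq : ∀ m : ℕ, (∫ u in (0:ℝ)..1, ∫ v in (0:ℝ)..1,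
      (gaussDensity (u * v) x * hermiteH m (x / Real.sqrt (u * v))) ^ 2 * (u * v))
      = ∫ u in (0:ℝ)..1, ∫ v in (0:ℝ)..1, gfun m x (u*v) := by
    intro m
    rfl
  have hInonneg : ∀ m : ℕ, 0 ≤ ∫ u in (0:ℝ)..1, ∫ v in (0:ℝ)..1, gfun m x (u*v) := by
    intro m
    apply intervalIntegral.integral_nonneg zero_le_one
    intro u hu
    apply intervalIntegral.integral_nonneg zero_le_one
    intro v hv
    exact gfun_nonneg m x (mul_nonneg hu.1 hv.1)
  have hT0 : ∀ m : ℕ, 0 ≤ (1 + (m : ℝ)) ^ α * (m.factorial : ℝ) *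
      ∫ u in (0:ℝ)..1, ∫ v in (0:ℝ)..1,
        (gaussDensity (u * v) x * hermiteH m (x / Real.sqrt (u * v))) ^ 2 * (u * v) := by
    intro m
    rw [hIeq m]
    have h1 : (0:ℝ) ≤ (1 + (m : ℝ)) ^ α := Real.rpow_nonneg (by positivity) α
    have h2 : (0:ℝ) ≤ (m.factorial : ℝ) := Nat.cast_nonneg _
    exact mul_nonneg (mul_nonneg h1 h2) (hInonneg m)
  by_cases hx : x = 0
  · subst hx
    apply Summable.of_nonneg_of_le hT0 (f := fun m : ℕ =>
      (2/π) * ((1+(m:ℝ))^α * (1/Real.sqrt (1+(m:ℝ)))))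
    · intro m
      rw [hIeq m, mul_assoc]
      have hkey : (m.factorial : ℝ) * (∫ u in (0:ℝ)..1, ∫ v in (0:ℝ)..1, gfun m 0 (u*v))
          ≤ (2/π) * (1/Real.sqrt (1+(m:ℝ))) := by
        have hm : (0:ℝ) < (m.factorial : ℝ) := by exact_mod_cast Nat.factorial_pos m
        have h1 := I_le m 0
        rw [K_zero m] at h1
        calc (m.factorial : ℝ) * (∫ u in (0:ℝ)..1, ∫ v in (0:ℝ)..1, gfun m 0 (u*v))
            ≤ (m.factorial : ℝ) *
              (2 * (2 * (((2*π)⁻¹ / ((m.factorial:ℝ))^2) * ((Hp m).eval 0)^2))) :=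
              mul_le_mul_of_nonneg_left h1 hm.le
          _ = (2/π) * rseq m := by
              unfold rseq
              field_simp
          _ ≤ (2/π) * (1/Real.sqrt (1+(m:ℝ))) := by
              apply mul_le_mul_of_nonneg_left (rseq_bound m) (by positivity)
      calc (1 + (m : ℝ)) ^ α * ((m.factorial : ℝ) *
            (∫ u in (0:ℝ)..1, ∫ v in (0:ℝ)..1, gfun m 0 (u*v)))
          ≤ (1 + (m : ℝ)) ^ α * ((2/π) * (1/Real.sqrt (1+(m:ℝ)))) :=
            mul_le_mul_of_nonneg_left hkey (Real.rpow_nonneg (by positivity) α)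
        _ = (2/π) * ((1+(m:ℝ))^α * (1/Real.sqrt (1+(m:ℝ)))) := by ring
    · exact summable_aux α hα _
  · apply Summable.of_nonneg_of_le hT0 (f := fun m : ℕ =>
      (2*Real.sqrt π/(π*|x|)) * ((1+(m:ℝ))^α * (1/Real.sqrt (1+(m:ℝ)))))
    · intro m
      rw [hIeq m, mul_assoc]
      have hkey : (m.factorial : ℝ) * (∫ u in (0:ℝ)..1, ∫ v in (0:ℝ)..1, gfun m x (u*v))
          ≤ (2*Real.sqrt π/(π*|x|)) * (1/Real.sqrt (1+(m:ℝ))) := by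
        have hm : (0:ℝ) < (m.factorial : ℝ) := by exact_mod_cast Nat.factorial_pos m
        have hxabs : (0:ℝ) < |x| := abs_pos.mpr hx
        have h1 := I_le m x
        have h2 := K_le m x hx
        have hdnn : 0 ≤ dval m := by
          unfold dval
          positivity
        calc (m.factorial : ℝ) * (∫ u in (0:ℝ)..1, ∫ v in (0:ℝ)..1, gfun m x (u*v))
            ≤ (m.factorial : ℝ) * (2 * Kval m x) := mul_le_mul_of_nonneg_left h1 hm.le
          _ ≤ (m.factorial : ℝ) * (2 * ((2 * ((2*π)⁻¹ / ((m.factorial:ℝ))^2) / |x|) * dval m))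
              := by
              apply mul_le_mul_of_nonneg_left _ hm.le
              apply mul_le_mul_of_nonneg_left h2 (by norm_num)
          _ = (2/(π*|x|)) * (dval m / (m.factorial : ℝ)) := by
              field_simp
          _ = (2/(π*|x|)) * (Real.sqrt π * tseq m) := by
              rw [dval_div_factorial]
          _ ≤ (2/(π*|x|)) * (Real.sqrt π * (1/Real.sqrt (1+(m:ℝ)))) := by
              apply mul_le_mul_of_nonneg_left _ (by positivity)
              exact mul_le_mul_of_nonneg_left (tseq_bound m) (Real.sqrt_nonneg π)
          _ = (2*Real.sqrt π/(π*|x|)) * (1/Real.sqrt (1+(m:ℝ))) := by ring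
      calc (1 + (m : ℝ)) ^ α * ((m.factorial : ℝ) *
            (∫ u in (0:ℝ)..1, ∫ v in (0:ℝ)..1, gfun m x (u*v)))
          ≤ (1 + (m : ℝ)) ^ α * ((2*Real.sqrt π/(π*|x|)) * (1/Real.sqrt (1+(m:ℝ)))) :=
            mul_le_mul_of_nonneg_left hkey (Real.rpow_nonneg (by positivity) α)
        _ = (2*Real.sqrt π/(π*|x|)) * ((1+(m:ℝ))^α * (1/Real.sqrt (1+(m:ℝ)))) := by ring
    · exact summable_aux α hα _
end
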